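/- Let d ∈ {1,2,3} and let Λ = Aℤ^d be a Bravais lattice with A ∈ ℝ^{d×d} invertible. Then the Axilrod-Teller-Muto lattice sum converges absolutely: ∑' |U^(3)_ATM(x,y)| < ∞, where the primed sum runs over pairs (x,y) ∈ Λ × Λ with x ≠ 0, y ≠ 0 and x ≠ y. -/

import Mathlib

open MeasureTheory Complex
open scoped Real InnerProductSpace

/-- The lattice point `A m` for an integer vector `m`, as an element of Euclidean space. -/
noncomputable def latticePt {d : ℕ} (A : Matrix (Fin d) (Fin d) ℝ) (m : Fin d → ℤ) :
    EuclideanSpace ℝ (Fin d) :=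
  WithLp.toLp 2 (A.mulVec fun j => (m j : ℝ))

/-- The Bravais lattice `Λ = A ℤ^d`. -/
def lattice {d : ℕ} (A : Matrix (Fin d) (Fin d) ℝ) : Set (EuclideanSpace ℝ (Fin d)) :=
  Set.range (latticePt A)

/-- The Axilrod–Teller–Muto three-body potential
`U^(3)_ATM(x,y) = |x|⁻³|y|⁻³|z|⁻³ − 3 (x·y)(y·z)(z·x)/(|x|⁵|y|⁵|z|⁵)` with `z = y − x`. -/
noncomputable def atmPotential {d : ℕ} (x y : EuclideanSpace ℝ (Fin d)) : ℝ :=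
  ‖x‖ ^ (-3 : ℤ) * ‖y‖ ^ (-3 : ℤ) * ‖y - x‖ ^ (-3 : ℤ) -
    3 * (⟪x, y⟫_ℝ * ⟪y, y - x⟫_ℝ * ⟪y - x, x⟫_ℝ) / (‖x‖ ^ 5 * ‖y‖ ^ 5 * ‖y - x‖ ^ 5)

/-- The index set of the primed sum: pairs `(x, y)` of lattice points with `x ≠ 0`,
`y ≠ 0`, `x ≠ y`. -/
def pairDomain {d : ℕ} (A : Matrix (Fin d) (Fin d) ℝ) :
    Set (EuclideanSpace ℝ (Fin d) × EuclideanSpace ℝ (Fin d)) :=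
  {p | p.1 ∈ lattice A ∧ p.2 ∈ lattice A ∧ p.1 ≠ 0 ∧ p.2 ≠ 0 ∧ p.1 ≠ p.2}

/-! ### Auxiliary definitions and lemmas -/

/-- The integer vector `m` as an element of Euclidean space. -/
noncomputable def ATMAux.intVec {d : ℕ} (m : Fin d → ℤ) : EuclideanSpace ℝ (Fin d) :=
  WithLp.toLp 2 (fun j => (m j : ℝ))

namespace ATMAux

lemma coord_le_norm {d : ℕ} (x : EuclideanSpace ℝ (Fin d)) (i : Fin d) : |x i| ≤ ‖x‖ := by
  have h1 : (x i)^2 ≤ ∑ j, (x j)^2 :=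
    Finset.single_le_sum (f := fun j => (x j)^2) (fun j _ => sq_nonneg _) (Finset.mem_univ i)
  calc |x i| = Real.sqrt ((x i)^2) := (Real.sqrt_sq_eq_abs _).symm
    _ ≤ Real.sqrt (∑ j, (x j)^2) := Real.sqrt_le_sqrt h1
    _ = ‖x‖ := by
        rw [EuclideanSpace.norm_eq x]
        congr 1
        exact Finset.sum_congr rfl fun j _ => by rw [Real.norm_eq_abs, _root_.sq_abs]

lemma one_le_norm_intVec {d : ℕ} (m : Fin d → ℤ) (hm : m ≠ 0) : (1:ℝ) ≤ ‖intVec m‖ := by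
  obtain ⟨i, hi⟩ : ∃ i, m i ≠ 0 := Function.ne_iff.mp hm
  have h2 : (1:ℝ) ≤ |(m i : ℝ)| := by
    rw [← Int.cast_abs]; exact_mod_cast Int.one_le_abs hi
  exact h2.trans (coord_le_norm (intVec m) i)

lemma latticePt_sub {d : ℕ} (A : Matrix (Fin d) (Fin d) ℝ) (m n : Fin d → ℤ) :
    latticePt A (m - n) = latticePt A m - latticePt A n := by
  unfold latticePt
  have : (fun j => ((m - n) j : ℝ)) = (fun j => (m j:ℝ)) - (fun j => (n j:ℝ)) := by
    funext j; simp
  rw [this, Matrix.mulVec_sub, WithLp.toLp_sub]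

lemma latticePt_zero {d : ℕ} (A : Matrix (Fin d) (Fin d) ℝ) : latticePt A 0 = 0 := by
  unfold latticePt
  have : (fun j => ((0 : Fin d → ℤ) j : ℝ)) = (0 : Fin d → ℝ) := by funext j; simp
  rw [this, Matrix.mulVec_zero, WithLp.toLp_zero]

lemma exists_opBound {d : ℕ} (A : Matrix (Fin d) (Fin d) ℝ) (hA : IsUnit A.det) :
    ∃ C : ℝ, 1 ≤ C ∧ ∀ m : Fin d → ℤ, ‖intVec m‖ ≤ C * ‖latticePt A m‖ := by
  set L : EuclideanSpace ℝ (Fin d) →ₗ[ℝ] EuclideanSpace ℝ (Fin d) := Matrix.toEuclideanLin A⁻¹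
  set T := LinearMap.toContinuousLinearMap L
  refine ⟨‖T‖ + 1, by nlinarith [norm_nonneg T], fun m => ?_⟩
  have key : T (latticePt A m) = intVec m := by
    show Matrix.toEuclideanLin A⁻¹ (WithLp.toLp 2 (A.mulVec fun j => (m j : ℝ))) = _
    rw [Matrix.toEuclideanLin_apply_piLp_toLp, Matrix.mulVec_mulVec,
      Matrix.nonsing_inv_mul A hA, Matrix.one_mulVec]
    rfl
  calc ‖intVec m‖ = ‖T (latticePt A m)‖ := by rw [key]
    _ ≤ ‖T‖ * ‖latticePt A m‖ := T.le_opNorm _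
    _ ≤ (‖T‖ + 1) * ‖latticePt A m‖ := by
        have := norm_nonneg (latticePt A m); nlinarith [norm_nonneg T]

lemma atm_zero_left {d : ℕ} (y : EuclideanSpace ℝ (Fin d)) : atmPotential 0 y = 0 := by
  simp [atmPotential, zero_zpow]

lemma atm_zero_right {d : ℕ} (x : EuclideanSpace ℝ (Fin d)) : atmPotential x 0 = 0 := by
  simp [atmPotential, zero_zpow]

lemma atm_diag {d : ℕ} (x y : EuclideanSpace ℝ (Fin d)) (h : x = y) : atmPotential x y = 0 := by
  simp [atmPotential, h, sub_self, zero_zpow]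

lemma atm_abs_le {d : ℕ} (x y : EuclideanSpace ℝ (Fin d)) :
    |atmPotential x y| ≤ 4 * ((‖x‖^3)⁻¹ * (‖y‖^3)⁻¹ * (‖y - x‖^3)⁻¹) := by
  set a := ‖x‖; set b := ‖y‖; set c := ‖y - x‖
  have ha : 0 ≤ a := norm_nonneg _
  have hb : 0 ≤ b := norm_nonneg _
  have hc : 0 ≤ c := norm_nonneg _
  have h1 : ‖x‖ ^ (-3 : ℤ) * ‖y‖ ^ (-3 : ℤ) * ‖y - x‖ ^ (-3 : ℤ)
      = (a^3)⁻¹ * (b^3)⁻¹ * (c^3)⁻¹ := by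
    simp [zpow_neg, zpow_ofNat]
    rfl
  rw [atmPotential, h1]
  have h2 : |3 * (⟪x, y⟫_ℝ * ⟪y, y - x⟫_ℝ * ⟪y - x, x⟫_ℝ) / (a ^ 5 * b ^ 5 * c ^ 5)|
      ≤ 3 * ((a^3)⁻¹ * (b^3)⁻¹ * (c^3)⁻¹) := by
    rcases eq_or_lt_of_le ha with ha0 | ha0
    · simp [← ha0]
    rcases eq_or_lt_of_le hb with hb0 | hb0
    · simp [← hb0]
    rcases eq_or_lt_of_le hc with hc0 | hc0
    · simp [← hc0]
    have hden : 0 < a^5*b^5*c^5 :=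
      mul_pos (mul_pos (pow_pos ha0 5) (pow_pos hb0 5)) (pow_pos hc0 5)
    rw [abs_div, abs_of_pos hden, div_le_iff₀ hden]
    have hin : |3 * (⟪x, y⟫_ℝ * ⟪y, y - x⟫_ℝ * ⟪y - x, x⟫_ℝ)| ≤ 3 * ((a*b) * (b*c) * (c*a)) := by
      rw [abs_mul, abs_mul, abs_mul]
      have e1 := abs_real_inner_le_norm x y
      have e2 := abs_real_inner_le_norm y (y - x)
      have e3 := abs_real_inner_le_norm (y - x) x
      have e4 : |(3:ℝ)| = 3 := by norm_num
      rw [e4]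
      gcongr
    refine hin.trans (le_of_eq ?_)
    field_simp
  calc |(a^3)⁻¹ * (b^3)⁻¹ * (c^3)⁻¹
        - 3 * (⟪x, y⟫_ℝ * ⟪y, y - x⟫_ℝ * ⟪y - x, x⟫_ℝ) / (a ^ 5 * b ^ 5 * c ^ 5)|
      ≤ |(a^3)⁻¹ * (b^3)⁻¹ * (c^3)⁻¹|
        + |3 * (⟪x, y⟫_ℝ * ⟪y, y - x⟫_ℝ * ⟪y - x, x⟫_ℝ) / (a ^ 5 * b ^ 5 * c ^ 5)| :=
        abs_sub _ _
    _ ≤ (a^3)⁻¹ * (b^3)⁻¹ * (c^3)⁻¹ + 3 * ((a^3)⁻¹ * (b^3)⁻¹ * (c^3)⁻¹) :=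
        add_le_add (le_of_eq (abs_of_nonneg (by positivity))) h2
    _ = 4 * ((a^3)⁻¹ * (b^3)⁻¹ * (c^3)⁻¹) := by ring

lemma three_term {a b c r : ℝ} (hr : 0 < r) (ha : r ≤ a) (hb : r ≤ b) (hc : r ≤ c) :
    (a^3)⁻¹ * (b^3)⁻¹ * (c^3)⁻¹ ≤
      r⁻¹ * ((a^4)⁻¹ * (b^4)⁻¹ + (a^4)⁻¹ * (c^4)⁻¹ + (b^4)⁻¹ * (c^4)⁻¹) := by
  have ha0 : 0 < a := hr.trans_le ha
  have hb0 : 0 < b := hr.trans_le hb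
  have hc0 : 0 < c := hr.trans_le hc
  have key : ∀ u v w : ℝ, 0 < u → 0 < v → r ≤ w → u ≤ w → v ≤ w →
      (u^3)⁻¹ * (v^3)⁻¹ * (w^3)⁻¹ ≤ r⁻¹ * ((u^4)⁻¹ * (v^4)⁻¹) := by
    intro u v w hu hv hrw huw hvw
    have hw : 0 < w := hr.trans_le hrw
    rw [← mul_inv, ← mul_inv, ← mul_inv, ← mul_inv]
    rw [inv_le_inv₀ (by positivity) (by positivity)]
    calc r * (u^4 * v^4) = r * ((u * u^3) * (v * v^3)) := by ring
      _ ≤ w * ((w * u^3) * (w * v^3)) := by gcongr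
      _ = u^3 * v^3 * w^3 := by ring
  have n1 : (0:ℝ) ≤ (a^4)⁻¹ * (b^4)⁻¹ := by positivity
  have n2 : (0:ℝ) ≤ (a^4)⁻¹ * (c^4)⁻¹ := by positivity
  have n3 : (0:ℝ) ≤ (b^4)⁻¹ * (c^4)⁻¹ := by positivity
  have n0 : (0:ℝ) ≤ r⁻¹ := by positivity
  rcases le_total a c with h1 | h1
  · rcases le_total b c with h2 | h2
    · have h := key a b c ha0 hb0 hc h1 h2
      nlinarith [mul_nonneg n0 n2, mul_nonneg n0 n3]
    · have h := key a c b ha0 hc0 hb (h1.trans h2) h2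
      nlinarith [mul_nonneg n0 n1, mul_nonneg n0 n3]
  · rcases le_total b a with h2 | h2
    · have h := key b c a hb0 hc0 ha h2 h1
      nlinarith [mul_nonneg n0 n1, mul_nonneg n0 n2]
    · have h := key a c b ha0 hc0 hb h2 (h1.trans h2)
      nlinarith [mul_nonneg n0 n1, mul_nonneg n0 n3]

/-- The comparison function on `ℤ`. -/
noncomputable def fexp (n : ℤ) : ℝ := (1 + |(n:ℝ)|) ^ (-(4/3) : ℝ)

lemma fexp_nonneg (n : ℤ) : 0 ≤ fexp n := Real.rpow_nonneg (by positivity) _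

lemma fexp_summable : Summable fexp := by
  have h0 : Summable (fun n : ℤ => |(n:ℝ)| ^ (-(4/3):ℝ)) :=
    Real.summable_abs_int_rpow (by norm_num)
  have hF : Summable (Function.update (fun n : ℤ => |(n:ℝ)| ^ (-(4/3):ℝ)) 0 1) := by
    apply h0.congr_cofinite
    apply Filter.eventuallyEq_of_mem (s := {0}ᶜ)
    · exact (Set.finite_singleton (0:ℤ)).compl_mem_cofinite
    · intro n hn
      have hn' : n ≠ 0 := hn
      simp [Function.update_of_ne hn']
  apply hF.of_nonneg_of_le (fun n => fexp_nonneg n)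
  intro n
  rcases eq_or_ne n 0 with rfl | hn
  · simp [fexp, Function.update_self]
  · rw [Function.update_of_ne hn]
    have h1 : (0:ℝ) < |(n:ℝ)| := by
      simp only [abs_pos, ne_eq, Int.cast_eq_zero]; exact hn
    exact Real.rpow_le_rpow_of_nonpos h1 (by linarith) (by norm_num)

lemma summable_pi_prod {f : ℤ → ℝ} (hf : Summable f) (h0 : 0 ≤ f) :
    ∀ d : ℕ, Summable fun m : Fin d → ℤ => ∏ i, f (m i) := by
  intro d
  induction d with
  | zero => exact .of_finite
  | succ d ih =>
      have h0' : (0 : (Fin d → ℤ) → ℝ) ≤ fun m => ∏ i, f (m i) :=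
        fun m => Finset.prod_nonneg fun i _ => h0 _
      have hprod := Summable.mul_of_nonneg hf ih h0 h0'
      have he := (Fin.consEquiv (fun _ : Fin (d+1) => ℤ)).summable_iff
        (f := fun m : Fin (d+1) → ℤ => ∏ i, f (m i))
      rw [← he]
      apply hprod.congr
      intro p
      simp only [Fin.consEquiv_apply, Function.comp]
      rw [Fin.prod_univ_succ]
      simp [Fin.cons_zero, Fin.cons_succ]

lemma inv_norm_pow_le {d : ℕ} (hd : (d:ℝ) ≤ 3) (m : Fin d → ℤ) (hm : m ≠ 0) :
    (‖intVec m‖^4)⁻¹ ≤ 16 * ∏ i, fexp (m i) := by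
  set t := ‖intVec m‖ with ht
  have ht1 : (1:ℝ) ≤ t := one_le_norm_intVec m hm
  have ht0 : (0:ℝ) < t := by linarith
  have hcoord : ∀ i, (1 + |(m i : ℝ)|) ≤ 2 * t := by
    intro i
    have h := coord_le_norm (intVec m) i
    have h' : |(m i : ℝ)| ≤ t := h
    linarith
  have step1 : ∀ i, (2*t) ^ (-(4/3) : ℝ) ≤ fexp (m i) := by
    intro i
    exact Real.rpow_le_rpow_of_nonpos (by positivity) (hcoord i) (by norm_num)
  have step2 : ((2*t) ^ (-(4/3) : ℝ))^(d:ℕ) ≤ ∏ i, fexp (m i) := by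
    have e1 : ((2*t) ^ (-(4/3) : ℝ))^(d:ℕ) = ∏ _i : Fin d, (2*t) ^ (-(4/3) : ℝ) := by
      rw [Finset.prod_const]; simp
    rw [e1]
    exact Finset.prod_le_prod (fun i _ => by positivity) (fun i _ => step1 i)
  have step3 : (2*t) ^ ((-(4/3) : ℝ) * d) = ((2*t) ^ (-(4/3) : ℝ))^(d:ℕ) := by
    rw [← Real.rpow_natCast ((2*t) ^ (-(4/3) : ℝ)) d, ← Real.rpow_mul (by positivity)]
  have step4 : (2*t) ^ (-4 : ℝ) ≤ (2*t) ^ ((-(4/3) : ℝ) * d) := by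
    apply Real.rpow_le_rpow_of_exponent_le (by linarith)
    nlinarith
  have step5 : (2*t) ^ (-4 : ℝ) = ((2*t)^4)⁻¹ := by
    rw [Real.rpow_neg (by positivity)]
    norm_num
  have final : ((2*t)^4)⁻¹ ≤ ∏ i, fexp (m i) := by
    rw [← step5]
    exact step4.trans (step3.le.trans step2)
  calc (t^4)⁻¹ = 16 * ((2*t)^4)⁻¹ := by
        rw [mul_pow, mul_inv]
        norm_num
        ring
    _ ≤ 16 * ∏ i, fexp (m i) := by linarith

end ATMAux
/-- For `d ∈ {1,2,3}`, the Axilrod–Teller–Muto lattice sum converges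
absolutely: `∑' |U^(3)_ATM(x,y)| < ∞` over pairs of lattice points with `x ≠ 0`, `y ≠ 0`,
`x ≠ y`. -/
theorem atm_summable (d : ℕ) (hd : d = 1 ∨ d = 2 ∨ d = 3)
    (A : Matrix (Fin d) (Fin d) ℝ) (hA : IsUnit A.det) :
    Summable fun p : pairDomain A => |atmPotential p.1.1 p.1.2| := by
  classical
  open ATMAux in
  obtain ⟨C, hC1, hC⟩ := ATMAux.exists_opBound A hA
  have hC0 : (0:ℝ) < C := lt_of_lt_of_le one_pos hC1
  have hdr : (d:ℝ) ≤ 3 := by rcases hd with rfl | rfl | rfl <;> norm_num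
  -- lower bound on nonzero lattice points
  have hlow : ∀ m : Fin d → ℤ, m ≠ 0 → C⁻¹ ≤ ‖latticePt A m‖ := by
    intro m hm
    have h1 : (1:ℝ) ≤ C * ‖latticePt A m‖ :=
      (ATMAux.one_le_norm_intVec m hm).trans (hC m)
    have h3 : C⁻¹ * 1 ≤ C⁻¹ * (C * ‖latticePt A m‖) :=
      mul_le_mul_of_nonneg_left h1 (inv_nonneg.mpr hC0.le)
    rwa [mul_one, ← mul_assoc, inv_mul_cancel₀ hC0.ne', one_mul] at h3
  have hpos : ∀ m : Fin d → ℤ, m ≠ 0 → 0 < ‖latticePt A m‖ :=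
    fun m hm => lt_of_lt_of_le (inv_pos.mpr hC0) (hlow m hm)
  -- the comparison function on ℤ^d
  set g : (Fin d → ℤ) → ℝ := fun m => (‖latticePt A m‖^4)⁻¹ with hgdef
  have hgnn : ∀ m, 0 ≤ g m := fun m => by positivity
  have hgs : Summable g := by
    have hb := ATMAux.summable_pi_prod ATMAux.fexp_summable
      (fun n => ATMAux.fexp_nonneg n) d
    apply (hb.mul_left (16 * C^4)).of_nonneg_of_le hgnn
    intro m
    rcases eq_or_ne m 0 with rfl | hm
    · have h0 : latticePt A 0 = (0 : EuclideanSpace ℝ (Fin d)) := ATMAux.latticePt_zero A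
      have : g 0 = 0 := by simp [hgdef, h0]
      rw [this]
      have : 0 ≤ ∏ i, ATMAux.fexp ((0 : Fin d → ℤ) i) :=
        Finset.prod_nonneg fun i _ => ATMAux.fexp_nonneg _
      positivity
    · have t1 : (1:ℝ) ≤ ‖ATMAux.intVec m‖ := ATMAux.one_le_norm_intVec m hm
      have t0 : (0:ℝ) < ‖ATMAux.intVec m‖ := lt_of_lt_of_le one_pos t1
      have hAm : 0 < ‖latticePt A m‖ := hpos m hm
      have h2 : ‖ATMAux.intVec m‖^4 ≤ C^4 * ‖latticePt A m‖^4 := by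
        calc ‖ATMAux.intVec m‖^4 ≤ (C * ‖latticePt A m‖)^4 :=
              pow_le_pow_left₀ (norm_nonneg _) (hC m) 4
          _ = C^4 * ‖latticePt A m‖^4 := mul_pow _ _ _
      have h3 : g m ≤ C^4 * (‖ATMAux.intVec m‖^4)⁻¹ := by
        have e : g m = C^4 * (C^4 * ‖latticePt A m‖^4)⁻¹ := by
          rw [hgdef]
          field_simp
        rw [e]
        exact mul_le_mul_of_nonneg_left
          (inv_anti₀ (by positivity) h2) (by positivity)
      refine h3.trans ?_
      have h4 := ATMAux.inv_norm_pow_le hdr m hm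
      calc C^4 * (‖ATMAux.intVec m‖^4)⁻¹ ≤ C^4 * (16 * ∏ i, ATMAux.fexp (m i)) :=
            mul_le_mul_of_nonneg_left h4 (by positivity)
        _ = 16 * C^4 * ∏ i, ATMAux.fexp (m i) := by ring
  -- summability of the comparison function on pairs
  set F : (Fin d → ℤ) × (Fin d → ℤ) → ℝ :=
    fun q => |atmPotential (latticePt A q.1) (latticePt A q.2)| with hFdef
  have hFs : Summable F := by
    have hTprod := Summable.mul_of_nonneg hgs hgs hgnn hgnn
    have hT2 : Summable (fun q : (Fin d → ℤ) × (Fin d → ℤ) => g q.1 * g (q.2 - q.1)) := by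
      have hinj : Function.Injective
          (fun q : (Fin d → ℤ) × (Fin d → ℤ) => (q.1, q.2 - q.1)) := by
        intro p q h
        simp only [Prod.mk.injEq] at h
        obtain ⟨h1, h2⟩ := h
        refine Prod.ext h1 ?_
        have := congrArg (· + p.1) h2
        simpa [h1, sub_add_cancel] using this
      exact (hTprod.comp_injective hinj).congr (fun q => rfl)
    have hT3 : Summable (fun q : (Fin d → ℤ) × (Fin d → ℤ) => g q.2 * g (q.2 - q.1)) := by
      have hinj : Function.Injective
          (fun q : (Fin d → ℤ) × (Fin d → ℤ) => (q.2, q.2 - q.1)) := by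
        intro p q h
        simp only [Prod.mk.injEq] at h
        obtain ⟨h1, h2⟩ := h
        rw [h1] at h2
        refine Prod.ext ?_ h1
        exact sub_right_injective h2
      exact (hTprod.comp_injective hinj).congr (fun q => rfl)
    have hG : Summable (fun q : (Fin d → ℤ) × (Fin d → ℤ) =>
        (4*C) * (g q.1 * g q.2 + g q.1 * g (q.2 - q.1) + g q.2 * g (q.2 - q.1))) :=
      ((hTprod.add hT2).add hT3).mul_left _
    apply hG.of_nonneg_of_le (fun q => abs_nonneg _)
    intro q
    have hrhs0 : 0 ≤ (4*C) * (g q.1 * g q.2 + g q.1 * g (q.2 - q.1) + g q.2 * g (q.2 - q.1)) := by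
      have a1 := mul_nonneg (hgnn q.1) (hgnn q.2)
      have a2 := mul_nonneg (hgnn q.1) (hgnn (q.2 - q.1))
      have a3 := mul_nonneg (hgnn q.2) (hgnn (q.2 - q.1))
      nlinarith
    rcases eq_or_ne q.1 0 with h1 | h1
    · have e0 : latticePt A q.1 = 0 := by rw [h1, ATMAux.latticePt_zero]
      rw [e0, ATMAux.atm_zero_left, abs_zero]
      exact hrhs0
    rcases eq_or_ne q.2 0 with h2 | h2
    · have e0 : latticePt A q.2 = 0 := by rw [h2, ATMAux.latticePt_zero]
      rw [e0, ATMAux.atm_zero_right, abs_zero]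
      exact hrhs0
    rcases eq_or_ne q.1 q.2 with h3 | h3
    · rw [ATMAux.atm_diag (latticePt A q.1) (latticePt A q.2) (by rw [h3]), abs_zero]
      exact hrhs0
    · -- main case
      have hz : q.2 - q.1 ≠ 0 := sub_ne_zero.mpr (Ne.symm h3)
      have hsub : latticePt A q.2 - latticePt A q.1 = latticePt A (q.2 - q.1) :=
        (ATMAux.latticePt_sub A q.2 q.1).symm
      have hb := ATMAux.atm_abs_le (latticePt A q.1) (latticePt A q.2)
      rw [hsub] at hb
      have h3t := ATMAux.three_term (inv_pos.mpr hC0) (hlow q.1 h1) (hlow q.2 h2)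
        (hlow (q.2 - q.1) hz)
      rw [inv_inv] at h3t
      refine hb.trans ?_
      have : (‖latticePt A q.1‖^3)⁻¹ * (‖latticePt A q.2‖^3)⁻¹ * (‖latticePt A (q.2 - q.1)‖^3)⁻¹
          ≤ C * (g q.1 * g q.2 + g q.1 * g (q.2 - q.1) + g q.2 * g (q.2 - q.1)) := by
        refine h3t.trans (le_of_eq ?_)
        rw [hgdef]
      calc 4 * ((‖latticePt A q.1‖^3)⁻¹ * (‖latticePt A q.2‖^3)⁻¹
            * (‖latticePt A (q.2 - q.1)‖^3)⁻¹)
          ≤ 4 * (C * (g q.1 * g q.2 + g q.1 * g (q.2 - q.1) + g q.2 * g (q.2 - q.1))) := by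
            linarith
        _ = (4*C) * (g q.1 * g q.2 + g q.1 * g (q.2 - q.1) + g q.2 * g (q.2 - q.1)) := by ring
  -- transfer to the subtype via choice
  have hmem : ∀ p : pairDomain A,
      (∃ m, latticePt A m = p.1.1) ∧ (∃ m, latticePt A m = p.1.2) :=
    fun p => ⟨p.2.1, p.2.2.1⟩
  set ι : pairDomain A → (Fin d → ℤ) × (Fin d → ℤ) :=
    fun p => ((hmem p).1.choose, (hmem p).2.choose) with hιdef
  have hι1 : ∀ p : pairDomain A, latticePt A (ι p).1 = p.1.1 :=
    fun p => (hmem p).1.choose_spec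
  have hι2 : ∀ p : pairDomain A, latticePt A (ι p).2 = p.1.2 :=
    fun p => (hmem p).2.choose_spec
  have hinj : Function.Injective ι := by
    intro p q h
    have e1 : p.1.1 = q.1.1 := by rw [← hι1 p, ← hι1 q, h]
    have e2 : p.1.2 = q.1.2 := by rw [← hι2 p, ← hι2 q, h]
    exact Subtype.ext (Prod.ext e1 e2)
  have := hFs.comp_injective hinj
  apply this.congr
  intro p
  simp only [Function.comp, hFdef, hι1 p, hι2 p]
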